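/- For any vector A = (a_1,...,a_m) of nonnegative integers, the polynomial Δ(A;t) is 3-special: writing R(Δ(A;t)) = a + bT + cT^2, either a = b = c or |a−b| + |a−c| + |b−c| = 2. -/

import Mathlib

open Polynomial

/-- The sum of coefficients of `g` over exponents `≡ i (mod 3)`. -/
noncomputable def Rcoef (i : ℕ) (g : Polynomial ℤ) : ℤ :=
  ∑ h ∈ g.support.filter (fun h => h % 3 = i), g.coeff h

/-- `(a,b,c)` is special if `a = b = c` or `|a-b|+|a-c|+|b-c| = 2`. -/
def Special (a b c : ℤ) : Prop :=
  (a = b ∧ b = c) ∨ |a - b| + |a - c| + |b - c| = 2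

/-- `g` is 3-special if its residue-class coefficient sums form a special triple. -/
def IsThreeSpecial (g : Polynomial ℤ) : Prop :=
  Special (Rcoef 0 g) (Rcoef 1 g) (Rcoef 2 g)

/-- `Δ(a;t) = t + t² + ⋯ + tᵃ` (with `Δ(0;t) = 0`). -/
noncomputable def Delta1 (a : ℕ) : Polynomial ℤ := ∑ h ∈ Finset.Icc 1 a, X ^ h

/-- `Δ(A;t)` computed from the reversed list (last coordinate first). -/
noncomputable def DeltaRev : List ℕ → Polynomial ℤ
  | [] => 1
  | [a] => Delta1 a
  | a :: b :: rest => DeltaRev (b :: rest) * Delta1 a - DeltaRev rest * X ^ (a + 1)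

/-- `Δ(a₁,…,a_m;t)`. -/
noncomputable def Delta (A : List ℕ) : Polynomial ℤ := DeltaRev A.reverse

/-! ### Eisenstein integers -/

structure Eis where
  re : ℤ
  im : ℤ
  deriving DecidableEq

namespace Eis

instance : Zero Eis := ⟨⟨0, 0⟩⟩
instance : One Eis := ⟨⟨1, 0⟩⟩
instance : Add Eis := ⟨fun a b => ⟨a.re + b.re, a.im + b.im⟩⟩
instance : Neg Eis := ⟨fun a => ⟨-a.re, -a.im⟩⟩
instance : Mul Eis :=
  ⟨fun a b => ⟨a.re * b.re - a.im * b.im, a.re * b.im + a.im * b.re - a.im * b.im⟩⟩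

@[simp] lemma zero_re : (0 : Eis).re = 0 := rfl
@[simp] lemma zero_im : (0 : Eis).im = 0 := rfl
@[simp] lemma one_re : (1 : Eis).re = 1 := rfl
@[simp] lemma one_im : (1 : Eis).im = 0 := rfl
@[simp] lemma add_re (a b : Eis) : (a + b).re = a.re + b.re := rfl
@[simp] lemma add_im (a b : Eis) : (a + b).im = a.im + b.im := rfl
@[simp] lemma neg_re (a : Eis) : (-a).re = -a.re := rfl
@[simp] lemma neg_im (a : Eis) : (-a).im = -a.im := rfl
@[simp] lemma mul_re (a b : Eis) : (a * b).re = a.re * b.re - a.im * b.im := rfl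
@[simp] lemma mul_im (a b : Eis) :
    (a * b).im = a.re * b.im + a.im * b.re - a.im * b.im := rfl

@[ext] lemma ext' {a b : Eis} (h1 : a.re = b.re) (h2 : a.im = b.im) : a = b := by
  cases a; cases b; simp_all

instance : NatCast Eis := ⟨fun n => ⟨n, 0⟩⟩
instance : IntCast Eis := ⟨fun n => ⟨n, 0⟩⟩

@[simp] lemma natCast_re (n : ℕ) : (n : Eis).re = n := rfl
@[simp] lemma natCast_im (n : ℕ) : (n : Eis).im = 0 := rfl
@[simp] lemma intCast_re (n : ℤ) : (n : Eis).re = n := rfl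
@[simp] lemma intCast_im (n : ℤ) : (n : Eis).im = 0 := rfl

instance : CommRing Eis where
  add_assoc a b c := by ext <;> simp <;> ring
  zero_add a := by ext <;> simp
  add_zero a := by ext <;> simp
  add_comm a b := by ext <;> simp <;> ring
  neg_add_cancel a := by ext <;> simp
  left_distrib a b c := by ext <;> simp <;> ring
  right_distrib a b c := by ext <;> simp <;> ring
  zero_mul a := by ext <;> simp
  mul_zero a := by ext <;> simp
  mul_assoc a b c := by ext <;> simp <;> ring
  one_mul a := by ext <;> simp
  mul_one a := by ext <;> simp
  mul_comm a b := by ext <;> simp <;> ring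
  natCast n := (n : Eis)
  natCast_zero := by ext <;> simp
  natCast_succ n := by ext <;> simp
  intCast n := (n : Eis)
  intCast_ofNat n := by ext <;> simp
  intCast_negSucc n := by ext <;> simp [Int.negSucc_eq]
  nsmul n a := ⟨n * a.re, n * a.im⟩
  nsmul_zero a := by
    show (⟨((0:ℕ):ℤ) * a.re, ((0:ℕ):ℤ) * a.im⟩ : Eis) = 0; ext <;> simp
  nsmul_succ n a := by
    show (⟨((n+1:ℕ):ℤ) * a.re, ((n+1:ℕ):ℤ) * a.im⟩ : Eis) = ⟨(n:ℤ) * a.re, (n:ℤ) * a.im⟩ + a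
    ext <;> simp <;> push_cast <;> ring
  zsmul n a := ⟨n * a.re, n * a.im⟩
  zsmul_zero' a := by
    show (⟨(0:ℤ) * a.re, (0:ℤ) * a.im⟩ : Eis) = 0; ext <;> simp
  zsmul_succ' n a := by
    show (⟨((n.succ:ℕ):ℤ) * a.re, ((n.succ:ℕ):ℤ) * a.im⟩ : Eis) = ⟨(n:ℤ) * a.re, (n:ℤ) * a.im⟩ + a
    ext <;> simp <;> push_cast <;> ring
  zsmul_neg' n a := by
    show (⟨(Int.negSucc n) * a.re, (Int.negSucc n) * a.im⟩ : Eis) = -⟨((n.succ:ℕ):ℤ) * a.re, ((n.succ:ℕ):ℤ) * a.im⟩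
    ext <;> simp [Int.negSucc_eq] <;> push_cast <;> ring

/-- The primitive cube root of unity. -/
def w : Eis := ⟨0, 1⟩

lemma w_cube : w ^ 3 = 1 := by decide

lemma w_pow_mod (n : ℕ) : w ^ n = w ^ (n % 3) := by
  conv_lhs => rw [← Nat.div_add_mod n 3, pow_add, pow_mul, w_cube, one_pow, one_mul]

end Eis

open Eis

/-- Evaluation of an integer polynomial at `ω`. -/
noncomputable def ev : Polynomial ℤ →+* Eis :=
  Polynomial.eval₂RingHom (Int.castRingHom Eis) w

/-! ### Relating `ev` and `Rcoef` -/

lemma Rcoef_eq_sum (i : ℕ) (g : Polynomial ℤ) :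
    Rcoef i g = g.sum (fun h a => if h % 3 = i then a else 0) := by
  rw [Rcoef, Polynomial.sum, Finset.sum_filter]

lemma Rcoef_add (i : ℕ) (p q : Polynomial ℤ) :
    Rcoef i (p + q) = Rcoef i p + Rcoef i q := by
  simp only [Rcoef_eq_sum]
  apply Polynomial.sum_add_index <;> intros <;> split <;> simp

lemma Rcoef_monomial (i n : ℕ) (a : ℤ) :
    Rcoef i (Polynomial.monomial n a) = if n % 3 = i then a else 0 := by
  rw [Rcoef_eq_sum]
  apply Polynomial.sum_monomial_index
  simp

lemma ev_eq (g : Polynomial ℤ) :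
    ev g = ⟨Rcoef 0 g - Rcoef 2 g, Rcoef 1 g - Rcoef 2 g⟩ := by
  induction g using Polynomial.induction_on' with
  | add p q hp hq =>
      rw [map_add, hp, hq]
      simp only [Rcoef_add]
      ext <;> simp <;> ring
  | monomial n a =>
      have : ev (Polynomial.monomial n a) = (a : Eis) * w ^ n := by
        simp [ev, Polynomial.eval₂_monomial]
      rw [this, Eis.w_pow_mod]
      simp only [Rcoef_monomial]
      have h3 : n % 3 = 0 ∨ n % 3 = 1 ∨ n % 3 = 2 := by omega
      rcases h3 with h | h | h <;> rw [h] <;> ext <;>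
        simp [Eis.w, pow_succ, Eis.instMul] <;> ring

/-! ### The finite automaton -/

/-- `u r` is `ev (Delta1 a)` when `a % 3 = r`. -/
def u : ℕ → Eis
  | 0 => 0
  | 1 => w
  | _ => -1

/-- The set of good pairs `(ev (DeltaRev (a :: L)), ev (DeltaRev L))`. -/
def goodList : List (Eis × Eis) :=
  [(Eis.mk (-1) (-1), Eis.mk 0 0),
   (Eis.mk (-1) (-1), Eis.mk 0 1),
   (Eis.mk (-1) (-1), Eis.mk 1 1),
   (Eis.mk (-1) 0, Eis.mk 0 0),
   (Eis.mk (-1) 0, Eis.mk 1 0),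
   (Eis.mk (-1) 0, Eis.mk 1 1),
   (Eis.mk 0 (-1), Eis.mk (-1) 0),
   (Eis.mk 0 (-1), Eis.mk 0 0),
   (Eis.mk 0 (-1), Eis.mk 0 1),
   (Eis.mk 0 0, Eis.mk (-1) (-1)),
   (Eis.mk 0 0, Eis.mk (-1) 0),
   (Eis.mk 0 0, Eis.mk 0 (-1)),
   (Eis.mk 0 0, Eis.mk 0 1),
   (Eis.mk 0 0, Eis.mk 1 0),
   (Eis.mk 0 0, Eis.mk 1 1),
   (Eis.mk 0 1, Eis.mk 0 (-1)),
   (Eis.mk 0 1, Eis.mk 0 0),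
   (Eis.mk 0 1, Eis.mk 1 0),
   (Eis.mk 1 0, Eis.mk (-1) (-1)),
   (Eis.mk 1 0, Eis.mk (-1) 0),
   (Eis.mk 1 0, Eis.mk 0 0),
   (Eis.mk 1 1, Eis.mk (-1) (-1)),
   (Eis.mk 1 1, Eis.mk 0 (-1)),
   (Eis.mk 1 1, Eis.mk 0 0)]

/-- The seven possible values. -/
def valList : List Eis :=
  [Eis.mk 0 0, Eis.mk 1 0, Eis.mk 0 1, Eis.mk (-1) (-1),
   Eis.mk (-1) 0, Eis.mk 0 (-1), Eis.mk 1 1]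

lemma step_lemma (r : ℕ) (hr : r < 3) :
    ∀ p ∈ goodList, (p.1 * u r - p.2 * w ^ (r + 1), p.1) ∈ goodList := by
  interval_cases r <;> decide

lemma start_lemma (r : ℕ) (hr : r < 3) : (u r, (1 : Eis)) ∈ goodList := by
  interval_cases r <;> decide

lemma good_fst : ∀ p ∈ goodList, p.1 ∈ valList := by decide

/-! ### Evaluating the `Delta` polynomials -/

lemma ev_Delta1 (a : ℕ) : ev (Delta1 a) = u (a % 3) := by
  induction a with
  | zero => simp [Delta1, u]
  | succ a ih =>
      have hsplit : Delta1 (a + 1) = Delta1 a + X ^ (a + 1) := by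
        rw [Delta1, Delta1, Finset.sum_Icc_succ_top (by omega : 1 ≤ a + 1)]
      rw [hsplit, map_add, ih]
      have hX : ev (X ^ (a + 1) : Polynomial ℤ) = w ^ (a + 1) := by
        simp [ev]
      rw [hX, Eis.w_pow_mod]
      have h3 : a % 3 = 0 ∨ a % 3 = 1 ∨ a % 3 = 2 := by omega
      rcases h3 with h | h | h <;>
        rw [h, show (a + 1) % 3 = (a % 3 + 1) % 3 from by omega, h] <;> decide

lemma ev_X_pow (a : ℕ) : ev (X ^ (a + 1) : Polynomial ℤ) = w ^ (a % 3 + 1) := by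
  have hX : ev (X ^ (a + 1) : Polynomial ℤ) = w ^ (a + 1) := by simp [ev]
  rw [hX, Eis.w_pow_mod, Eis.w_pow_mod (a % 3 + 1)]
  congr 1
  omega

lemma main_pair : ∀ (L : List ℕ) (a : ℕ),
    (ev (DeltaRev (a :: L)), ev (DeltaRev L)) ∈ goodList := by
  intro L
  induction L with
  | nil =>
      intro a
      rw [show DeltaRev [a] = Delta1 a from rfl, show DeltaRev [] = 1 from rfl,
        map_one, ev_Delta1]
      exact start_lemma _ (Nat.mod_lt _ (by omega))
  | cons b rest ih =>
      intro a
      have hdef : DeltaRev (a :: b :: rest)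
          = DeltaRev (b :: rest) * Delta1 a - DeltaRev rest * X ^ (a + 1) := rfl
      rw [hdef, map_sub, map_mul, map_mul, ev_Delta1, ev_X_pow]
      exact step_lemma (a % 3) (Nat.mod_lt _ (by omega)) _ (ih b)

lemma ev_Delta_mem (A : List ℕ) : ev (Delta A) ∈ valList := by
  rw [Delta]
  cases hA : A.reverse with
  | nil => rw [show DeltaRev [] = 1 from rfl, map_one]; decide
  | cons a L => exact good_fst _ (main_pair L a)

/-! ### From values to `Special` -/

lemma special_of_val (a b c : ℤ) (e : Eis) (he : e ∈ valList)
    (h1 : a - c = e.re) (h2 : b - c = e.im) : Special a b c := by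
  fin_cases he <;> simp only at h1 h2
  · exact Or.inl ⟨by omega, by omega⟩
  · exact Or.inr (by
      rw [show a - b = (1 : ℤ) from by omega, show a - c = (1 : ℤ) from by omega,
        show b - c = (0 : ℤ) from by omega]; decide)
  · exact Or.inr (by
      rw [show a - b = (-1 : ℤ) from by omega, show a - c = (0 : ℤ) from by omega,
        show b - c = (1 : ℤ) from by omega]; decide)
  · exact Or.inr (by
      rw [show a - b = (0 : ℤ) from by omega, show a - c = (-1 : ℤ) from by omega,
        show b - c = (-1 : ℤ) from by omega]; decide)
  · exact Or.inr (by
      rw [show a - b = (-1 : ℤ) from by omega, show a - c = (-1 : ℤ) from by omega,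
        show b - c = (0 : ℤ) from by omega]; decide)
  · exact Or.inr (by
      rw [show a - b = (1 : ℤ) from by omega, show a - c = (0 : ℤ) from by omega,
        show b - c = (-1 : ℤ) from by omega]; decide)
  · exact Or.inr (by
      rw [show a - b = (0 : ℤ) from by omega, show a - c = (1 : ℤ) from by omega,
        show b - c = (1 : ℤ) from by omega]; decide)

theorem Delta_isThreeSpecial (A : List ℕ) : IsThreeSpecial (Delta A) := by
  have hmem := ev_Delta_mem A
  have heq := ev_eq (Delta A)
  refine special_of_val _ _ _ (ev (Delta A)) hmem ?_ ?_ <;> rw [heq]
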